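/- Let S = S₁ ∪ S₂ ⊆ ℝ² with S₁ = {(a,b) | (b+1−a²)² ≤ 4b} and S₂ = {(a,b) | (b+1−a²)² ≥ 4b, b ≥ 0, a² ≤ b+1}. Then the singleton {(1,0)} is a face of S, but it is a non-exposed face: the only affine function ℓ vanishing at (1,0) with ℓ ≥ 0 on S is (up to positive scalar) ℓ(a,b) = b, and its zero set on S is the segment {(a,0) | −1 ≤ a ≤ 1}, which strictly contains {(1,0)}. -/

import Mathlib

theorem one_zero_nonexposed_face :
    let S : Set (ℝ × ℝ) :=
      {p : ℝ × ℝ | (p.2 + 1 - p.1 ^ 2) ^ 2 ≤ 4 * p.2} ∪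
        {p : ℝ × ℝ | 4 * p.2 ≤ (p.2 + 1 - p.1 ^ 2) ^ 2 ∧ 0 ≤ p.2 ∧ p.1 ^ 2 ≤ p.2 + 1}
    -- {(1,0)} is a face of S
    IsExtreme ℝ S {((1 : ℝ), (0 : ℝ))} ∧
    -- every affine ℓ ≥ 0 on S vanishing at (1,0) is a nonnegative multiple of (a,b) ↦ b
    (∀ ℓ : (ℝ × ℝ) →ᵃ[ℝ] ℝ, (∀ p ∈ S, 0 ≤ ℓ p) → ℓ (1, 0) = 0 →
      ∃ c : ℝ, 0 ≤ c ∧ ∀ p : ℝ × ℝ, ℓ p = c * p.2) ∧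
    -- the zero set of (a,b) ↦ b on S is the segment {(a,0) | -1 ≤ a ≤ 1},
    ({p ∈ S | p.2 = 0} = {p : ℝ × ℝ | p.2 = 0 ∧ -1 ≤ p.1 ∧ p.1 ≤ 1}) ∧
    -- which strictly contains {(1,0)}
    {((1 : ℝ), (0 : ℝ))} ⊂ {p ∈ S | p.2 = 0} ∧
    -- hence {(1,0)} is not an exposed face
    ¬∃ ℓ : (ℝ × ℝ) →ᵃ[ℝ] ℝ, (∀ p ∈ S, 0 ≤ ℓ p) ∧
        {p ∈ S | ℓ p = 0} = {((1 : ℝ), (0 : ℝ))} := by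
  intro S
  -- basic membership facts
  have hseg : ∀ a : ℝ, -1 ≤ a → a ≤ 1 → ((a, (0:ℝ)) : ℝ × ℝ) ∈ S := by
    intro a h1 h2
    right
    refine ⟨?_, le_refl _, ?_⟩
    · show 4 * (0:ℝ) ≤ ((0:ℝ) + 1 - a ^ 2) ^ 2
      nlinarith
    · show a ^ 2 ≤ (0:ℝ) + 1
      nlinarith
  have h10 : ((1:ℝ), (0:ℝ)) ∈ S := hseg 1 (by norm_num) le_rfl
  have hm10 : ((-1:ℝ), (0:ℝ)) ∈ S := hseg (-1) le_rfl (by norm_num)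
  have hb : ∀ p ∈ S, (0:ℝ) ≤ p.2 := by
    rintro p (h | ⟨_, h2, _⟩)
    · simp only [Set.mem_setOf_eq] at h
      nlinarith [sq_nonneg (p.2 + 1 - p.1 ^ 2)]
    · exact h2
  have ha : ∀ p ∈ S, p.2 = 0 → -1 ≤ p.1 ∧ p.1 ≤ 1 := by
    rintro p (h | ⟨h1, h2, h3⟩) hp
    · simp only [Set.mem_setOf_eq] at h
      rw [hp] at h
      constructor <;> nlinarith [sq_nonneg (p.1 - 1), sq_nonneg (p.1 + 1)]
    · rw [hp] at h3
      constructor <;> nlinarith [sq_nonneg (p.1 - 1), sq_nonneg (p.1 + 1)]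
  have hpar : ∀ s : ℝ, 0 ≤ s → ((1 + s, s ^ 2) : ℝ × ℝ) ∈ S := by
    intro s hs
    left
    show (s ^ 2 + 1 - (1 + s) ^ 2) ^ 2 ≤ 4 * s ^ 2
    ring_nf
    nlinarith
  have h01 : ((0:ℝ), (1:ℝ)) ∈ S := by
    left; norm_num
  -- the main functional lemma (second bullet)
  have key : ∀ ℓ : (ℝ × ℝ) →ᵃ[ℝ] ℝ, (∀ p ∈ S, 0 ≤ ℓ p) → ℓ (1, 0) = 0 →
      ∃ c : ℝ, 0 ≤ c ∧ ∀ p : ℝ × ℝ, ℓ p = c * p.2 := by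
    intro ℓ hpos h0
    set γ : ℝ := ℓ (0, 0) with hγ
    set α : ℝ := ℓ.linear (1, 0) with hα
    set β : ℝ := ℓ.linear (0, 1) with hβ
    have hform : ∀ p : ℝ × ℝ, ℓ p = γ + p.1 * α + p.2 * β := by
      intro p
      have h1 : ℓ.linear (p - (0, 0)) = ℓ p - ℓ (0, 0) := ℓ.linearMap_vsub p (0, 0)
      have h2 : (p : ℝ × ℝ) = p.1 • ((1:ℝ), (0:ℝ)) + p.2 • ((0:ℝ), (1:ℝ)) := by
        ext <;> simp
      have h3 : ℓ.linear p = p.1 * α + p.2 * β := by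
        rw [h2, map_add, map_smul, map_smul, ← h2]
        simp [hα, hβ, smul_eq_mul]
      have h4 : ℓ.linear (p - (0,0)) = ℓ.linear p := by norm_num; exact map_zero ℓ.linear
      rw [h4, h3] at h1
      linarith
    have hαγ : γ + α = 0 := by
      have := hform (1, 0); rw [h0] at this; simp at this; linarith
    have hαle : α ≤ 0 := by
      have := hpos _ hm10
      rw [hform (-1, 0)] at this
      simp at this
      linarith
    have hsαβ : ∀ s : ℝ, 0 ≤ s → 0 ≤ s * α + s ^ 2 * β := by
      intro s hs
      have := hpos _ (hpar s hs)
      rw [hform (1 + s, s ^ 2)] at this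
      simp at this
      nlinarith
    have hαge : 0 ≤ α := by
      by_contra hlt
      push_neg at hlt
      rcases le_or_gt β 0 with hβ0 | hβ0
      · have := hsαβ 1 zero_le_one
        nlinarith
      · have hs : 0 < -α / (2 * β) := div_pos (by linarith) (by linarith)
        have := hsαβ (-α / (2 * β)) hs.le
        have heq : (-α / (2 * β)) ^ 2 * β = -α / (2 * β) * (-α / 2) := by
          field_simp
        rw [heq] at this
        nlinarith [mul_pos hs (show (0:ℝ) < -α by linarith)]
    have hα0 : α = 0 := le_antisymm hαle hαge
    have hγ0 : γ = 0 := by linarith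
    have hβge : 0 ≤ β := by
      have := hpos _ h01
      rw [hform (0, 1)] at this
      simp at this
      linarith [hα0, hγ0, this]
    exact ⟨β, hβge, fun p => by rw [hform p, hα0, hγ0]; ring⟩
  refine ⟨?_, key, ?_, ?_, ?_⟩
  · -- IsExtreme
    constructor
    · intro x hx
      rw [Set.mem_singleton_iff] at hx
      rw [hx]; exact h10
    · rintro x hx y hy z hz ⟨u, v, hu, hv, huv, hsum⟩
      rw [Set.mem_singleton_iff] at hz
      subst hz
      have h2 : u * x.2 + v * y.2 = 0 := by
        have := congrArg Prod.snd hsum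
        simpa [Prod.smul_def, smul_eq_mul] using this
      have hx2 : x.2 = 0 := by
        nlinarith [hb x hx, hb y hy, mul_nonneg hu.le (hb x hx), mul_nonneg hv.le (hb y hy)]
      have hy2 : y.2 = 0 := by
        nlinarith [hb x hx, hb y hy, mul_nonneg hu.le (hb x hx), mul_nonneg hv.le (hb y hy)]
      have h1 : u * x.1 + v * y.1 = 1 := by
        have := congrArg Prod.fst hsum
        simpa [Prod.smul_def, smul_eq_mul] using this
      have hx1le := (ha x hx hx2).2
      have hy1le := (ha y hy hy2).2
      have hx1 : x.1 = 1 := by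
        nlinarith [mul_nonneg hu.le (sub_nonneg.2 hx1le), mul_nonneg hv.le (sub_nonneg.2 hy1le)]
      have hy1 : y.1 = 1 := by
        nlinarith [mul_nonneg hu.le (sub_nonneg.2 hx1le), mul_nonneg hv.le (sub_nonneg.2 hy1le)]
      rw [Set.mem_singleton_iff, Prod.ext_iff]
      constructor <;> assumption
  · -- zero set equality
    ext p
    simp only [Set.mem_setOf_eq, Set.mem_sep_iff]
    constructor
    · rintro ⟨hpS, hp2⟩
      exact ⟨hp2, (ha p hpS hp2).1, (ha p hpS hp2).2⟩
    · rintro ⟨hp2, h1, h2⟩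
      have := hseg p.1 h1 h2
      rw [show ((p.1, (0:ℝ)) : ℝ × ℝ) = p from Prod.ext rfl hp2.symm] at this
      exact ⟨this, hp2⟩
  · -- strict inclusion
    constructor
    · intro x hx
      rw [Set.mem_singleton_iff] at hx
      subst hx
      exact ⟨h10, rfl⟩
    · intro h
      have := h ⟨hm10, rfl⟩
      rw [Set.mem_singleton_iff, Prod.ext_iff] at this
      norm_num at this
  · -- non-exposedness
    rintro ⟨ℓ, hpos, hzero⟩
    have h10z : ((1:ℝ), (0:ℝ)) ∈ {p ∈ S | ℓ p = 0} := by
      rw [hzero]; rfl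
    obtain ⟨c, hc, hform⟩ := key ℓ hpos h10z.2
    have : ((-1:ℝ), (0:ℝ)) ∈ {p ∈ S | ℓ p = 0} := ⟨hm10, by rw [hform]; simp⟩
    rw [hzero, Set.mem_singleton_iff, Prod.ext_iff] at this
    norm_num at this
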